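/- Let X be a nonnegative random variable with support (0, r), r < ∞, whose moment generating function M_X(s) = E[e^{sX}] is finite for all s ∈ (−s₀, s₀) with s₀ > 0. Then for all s₁ ∈ (−s₀, 0), s₂ ∈ (0, s₀), and all (α, β) ∈ D_X with α > 0 and β > 0, one has G_X(α, β) ≤ g(r; α, β, s₁, s₂) · M_X(s₁)^α · M_X(s₂)^β, where g(r; α, β, s₁, s₂) = (1 − e^{−(αs₁ + βs₂) r}) / (αs₁ + βs₂) if αs₁ + βs₂ ≠ 0, and g = r if αs₁ + βs₂ = 0. -/

import Mathlib

open MeasureTheory ProbabilityTheory Set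

/-- The (essential) support interval of a CDF `F`: the set where `0 < F x < 1`,
which coincides (up to endpoints) with the interval `(l, r)` where
`l = inf {x : F x > 0}` and `r = sup {x : 1 - F x > 0}`. -/
def cigfSupport (F : ℝ → ℝ) : Set ℝ := {x | 0 < F x ∧ F x < 1}

/-- The cumulative information generating function
`G_X(α, β) = ∫_l^r F(x)^α (1 - F(x))^β dx`. -/
noncomputable def cigf (F : ℝ → ℝ) (α β : ℝ) : ℝ :=
  ∫ x in cigfSupport F, F x ^ α * (1 - F x) ^ β

/-- `(α, β) ∈ D_X`, i.e. `G_X(α, β) < ∞`. -/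
def memD (F : ℝ → ℝ) (α β : ℝ) : Prop :=
  IntegrableOn (fun x => F x ^ α * (1 - F x) ^ β) (cigfSupport F)

/-- The CDF of a random variable `X` under the probability measure `P`. -/
noncomputable def rvCDF {Ω : Type*} [MeasurableSpace Ω] (P : Measure Ω) (X : Ω → ℝ) (x : ℝ) : ℝ :=
  (P {ω | X ω ≤ x}).toReal

/-- The CDF of a probability measure on `ℝ`. -/
noncomputable def cdfOf (μ : Measure ℝ) (x : ℝ) : ℝ := (μ (Iic x)).toReal

theorem expint (c r : ℝ) (hc : c ≠ 0) (hr : 0 ≤ r) :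
    ∫ x in Ioo (0:ℝ) r, Real.exp (-c * x) = (1 - Real.exp (-c * r)) / c := by
  rw [← integral_Ioc_eq_integral_Ioo, ← intervalIntegral.integral_of_le hr,
    intervalIntegral.integral_comp_mul_left Real.exp (neg_ne_zero.mpr hc)]
  simp only [integral_exp, smul_eq_mul, mul_zero, Real.exp_zero, neg_mul]
  rw [eq_div_iff hc]
  ring_nf
  rw [mul_inv_cancel₀ hc]
  ring

/-- Chernoff-type bound for the CIGF of a nonnegative random variable with
support `(0, r)`, `r < ∞`, in terms of the moment generating function. -/
theorem stmt8 {Ω : Type*} [MeasurableSpace Ω] (P : Measure Ω) [IsProbabilityMeasure P]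
    (X : Ω → ℝ) (hX : Measurable X) (hXnn : ∀ ω, 0 ≤ X ω)
    (r : ℝ) (hr : 0 < r)
    (hsupp₀ : rvCDF P X 0 = 0)
    (hsupp₁ : ∀ x : ℝ, 0 < x → 0 < rvCDF P X x)
    (hsupp₂ : ∀ x : ℝ, x < r → rvCDF P X x < 1)
    (hsupp₃ : ∀ x : ℝ, r ≤ x → rvCDF P X x = 1)
    (s₀ : ℝ) (hs₀ : 0 < s₀)
    (hmgf : ∀ s ∈ Ioo (-s₀) s₀, Integrable (fun ω => Real.exp (s * X ω)) P)
    (s₁ : ℝ) (hs₁ : s₁ ∈ Ioo (-s₀) 0) (s₂ : ℝ) (hs₂ : s₂ ∈ Ioo (0:ℝ) s₀)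
    (α β : ℝ) (hα : 0 < α) (hβ : 0 < β) (hD : memD (rvCDF P X) α β) :
    cigf (rvCDF P X) α β ≤
      (if α * s₁ + β * s₂ = 0 then r
        else (1 - Real.exp (-(α * s₁ + β * s₂) * r)) / (α * s₁ + β * s₂)) *
        mgf X P s₁ ^ α * mgf X P s₂ ^ β := by
  set F := rvCDF P X with hF
  set c := α * s₁ + β * s₂ with hc
  set M₁ := mgf X P s₁ with hM₁
  set M₂ := mgf X P s₂ with hM₂
  have hint₁ : Integrable (fun ω => Real.exp (s₁ * X ω)) P :=
    hmgf s₁ ⟨hs₁.1, hs₁.2.trans hs₀⟩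
  have hint₂ : Integrable (fun ω => Real.exp (s₂ * X ω)) P :=
    hmgf s₂ ⟨lt_trans (neg_neg_of_pos hs₀) hs₂.1, hs₂.2⟩
  have hM₁nn : 0 ≤ M₁ := mgf_nonneg
  have hM₂nn : 0 ≤ M₂ := mgf_nonneg
  have hmono : Monotone F := by
    intro a b hab
    exact ENNReal.toReal_mono (measure_ne_top _ _)
      (measure_mono fun ω (h : X ω ≤ a) => h.trans hab)
  have hFnn : ∀ x, 0 ≤ F x := fun x => ENNReal.toReal_nonneg
  have hFle1 : ∀ x, F x ≤ 1 := fun x => by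
    simpa [hF, rvCDF] using ENNReal.toReal_mono ENNReal.one_ne_top (prob_le_one (μ := P))
  have hsupp_eq : cigfSupport F = Ioo 0 r := by
    ext x
    constructor
    · rintro ⟨h0, h1⟩
      constructor
      · by_contra h
        push_neg at h
        have : F x ≤ 0 := hsupp₀ ▸ hmono h
        linarith
      · by_contra h
        push_neg at h
        have := hsupp₃ x h
        linarith
    · rintro ⟨hx0, hxr⟩
      exact ⟨hsupp₁ x hx0, hsupp₂ x hxr⟩
  -- Chernoff bounds
  have hF_le : ∀ x : ℝ, F x ≤ Real.exp (-s₁ * x) * M₁ := fun x =>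
    measure_le_le_exp_mul_mgf x hs₁.2.le hint₁
  have hFc_le : ∀ x : ℝ, 1 - F x ≤ Real.exp (-s₂ * x) * M₂ := by
    intro x
    have hcompl : 1 - F x = (P {ω | x < X ω}).toReal := by
      have hms : MeasurableSet {ω | X ω ≤ x} := hX measurableSet_Iic
      have : P {ω | X ω ≤ x}ᶜ = 1 - P {ω | X ω ≤ x} := by
        rw [measure_compl hms (measure_ne_top _ _), measure_univ]
      have hcset : {ω | X ω ≤ x}ᶜ = {ω | x < X ω} := by
        ext ω; simp [not_le]
      rw [← hcset, this, ENNReal.toReal_sub_of_le (prob_le_one) (by simp)]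
      simp [hF, rvCDF]
    rw [hcompl]
    calc (P {ω | x < X ω}).toReal ≤ (P {ω | x ≤ X ω}).toReal :=
          ENNReal.toReal_mono (measure_ne_top _ _)
            (measure_mono fun ω (h : x < X ω) => h.le)
      _ ≤ Real.exp (-s₂ * x) * M₂ := measure_ge_le_exp_mul_mgf x hs₂.1.le hint₂
  -- pointwise bound
  have hpt : ∀ x : ℝ, F x ^ α * (1 - F x) ^ β ≤ Real.exp (-c * x) * (M₁ ^ α * M₂ ^ β) := by
    intro x
    have h1 : F x ^ α ≤ (Real.exp (-s₁ * x) * M₁) ^ α :=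
      Real.rpow_le_rpow (hFnn x) (hF_le x) hα.le
    have h2 : (1 - F x) ^ β ≤ (Real.exp (-s₂ * x) * M₂) ^ β :=
      Real.rpow_le_rpow (by linarith [hFle1 x]) (hFc_le x) hβ.le
    calc F x ^ α * (1 - F x) ^ β
        ≤ (Real.exp (-s₁ * x) * M₁) ^ α * ((Real.exp (-s₂ * x) * M₂) ^ β) :=
          mul_le_mul h1 h2 (Real.rpow_nonneg (by linarith [hFle1 x]) _)
            (Real.rpow_nonneg (mul_nonneg (Real.exp_pos _).le hM₁nn) _)
      _ = Real.exp (-c * x) * (M₁ ^ α * M₂ ^ β) := by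
          rw [Real.mul_rpow (Real.exp_pos _).le hM₁nn,
            Real.mul_rpow (Real.exp_pos _).le hM₂nn,
            ← Real.exp_mul, ← Real.exp_mul, mul_mul_mul_comm, ← Real.exp_add,
            show -s₁ * x * α + -s₂ * x * β = -c * x by rw [hc]; ring]
  -- integrability of the bound
  have hbound_int : IntegrableOn (fun x => Real.exp (-c * x) * (M₁ ^ α * M₂ ^ β))
      (Ioo 0 r) := by
    apply (((Real.continuous_exp.comp (continuous_const.mul continuous_id)).mul
      continuous_const).integrableOn_Icc (a := 0) (b := r)).mono_set Ioo_subset_Icc_self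
  have hDi : IntegrableOn (fun x => F x ^ α * (1 - F x) ^ β) (Ioo 0 r) := hsupp_eq ▸ hD
  have hmain : cigf F α β ≤ ∫ x in Ioo (0:ℝ) r, Real.exp (-c * x) * (M₁ ^ α * M₂ ^ β) := by
    rw [cigf, hsupp_eq]
    exact setIntegral_mono_on hDi hbound_int measurableSet_Ioo fun x _ => hpt x
  refine hmain.trans_eq ?_
  rw [MeasureTheory.integral_mul_const]
  rcases eq_or_ne c 0 with h0 | h0
  · rw [if_pos h0, h0]
    simp only [neg_zero, zero_mul, Real.exp_zero]
    rw [setIntegral_const]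
    simp [Real.volume_Ioo, ENNReal.toReal_ofReal hr.le, mul_assoc, hr.le]
  · rw [if_neg h0, expint c r h0 hr.le, mul_assoc]
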